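/- Let K be a number field with r₁ real embeddings and r₂ pairs of complex-conjugate embeddings, and let r = r₁ + r₂ − 1 be the rank of its unit group. Then there exist units ε₁,…,ε_r ∈ O_K^× that are multiplicatively independent (they generate a free abelian subgroup of rank r of O_K^×) and satisfy |φ(ε_i)| ≠ 1 for every 1 ≤ i ≤ r and every archimedean embedding φ : K → ℂ. -/

import Mathlib

open NumberField NumberField.Units NumberField.Units.dirichletUnitTheorem NumberField.InfinitePlace
open Finset
open scoped Classical

section Aux

variable (K : Type*) [Field K] [NumberField K]

/-- The chosen units: for each place `w ≠ w₀` a unit small at all places `≠ w`. -/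
noncomputable def auxUnit (w : {w : InfinitePlace K // w ≠ w₀}) : (𝓞 K)ˣ :=
  (exists_unit K w).choose

lemma auxUnit_spec (w : {w : InfinitePlace K // w ≠ w₀}) :
    ∀ w' : InfinitePlace K, w' ≠ w → Real.log (w' (auxUnit K w)) < 0 :=
  (exists_unit K w).choose_spec

/-- All places of `auxUnit` are `≠ 1`. -/
lemma auxUnit_ne_one (w : {w : InfinitePlace K // w ≠ w₀}) (w' : InfinitePlace K) :
    w' ((auxUnit K w : 𝓞 K) : K) ≠ 1 := by
  by_cases h : w' = (w : InfinitePlace K)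
  · -- product formula argument
    subst h
    intro habs
    have hsum := sum_logEmbedding_component (auxUnit K w)
    have hRHS : 0 < - (mult (w₀ : InfinitePlace K) : ℝ) * Real.log (w₀ ((auxUnit K w : 𝓞 K) : K)) := by
      refine mul_pos_of_neg_of_neg (neg_lt_zero.mpr ?_) (auxUnit_spec K w w₀ (Ne.symm w.prop))
      exact_mod_cast (mult_pos : 0 < mult (w₀ : InfinitePlace K))
    have hLHS : ∑ v : {w : InfinitePlace K // w ≠ w₀},
        logEmbedding K (Additive.ofMul (auxUnit K w)) v ≤ 0 := by
      refine Finset.sum_nonpos fun v _ => ?_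
      rw [logEmbedding_component]
      rcases eq_or_ne v w with rfl | hv
      · rw [habs, Real.log_one, mul_zero]
      · refine le_of_lt (mul_neg_of_pos_of_neg ?_ (auxUnit_spec K w v ?_))
        · exact_mod_cast mult_pos
        · exact fun hc => hv (Subtype.ext hc)
    rw [hsum] at hLHS
    linarith
  · intro habs
    have := auxUnit_spec K w w' h
    rw [habs, Real.log_one] at this
    exact lt_irrefl 0 this

/-- The log vectors of the `auxUnit`s are linearly independent. -/
lemma auxUnit_linearIndependent :
    LinearIndependent ℝ (fun w : {w : InfinitePlace K // w ≠ w₀} =>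
      logEmbedding K (Additive.ofMul (auxUnit K w))) := by
  let B := Pi.basisFun ℝ {w : InfinitePlace K // w ≠ w₀}
  let v := fun w : { w : InfinitePlace K // w ≠ w₀ } =>
    logEmbedding K (Additive.ofMul (auxUnit K w))
  suffices B.det v ≠ 0 by
    rw [← isUnit_iff_ne_zero, ← Module.Basis.is_basis_iff_det] at this
    exact this.1
  rw [Module.Basis.det_apply]
  refine det_ne_zero_of_sum_col_lt_diag (fun w => ?_)
  simp_rw [Real.norm_eq_abs, B, Module.Basis.coePiBasisFun.toMatrix_eq_transpose, Matrix.transpose, Matrix.of_apply]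
  rw [← sub_pos, Finset.sum_congr rfl (fun x hx => abs_of_neg ?_), Finset.sum_neg_distrib,
    sub_neg_eq_add, Finset.sum_erase_eq_sub (mem_univ _), ← add_comm_sub]
  · refine add_pos_of_nonneg_of_pos ?_ ?_
    · rw [sub_nonneg]
      exact le_abs_self _
    · rw [sum_logEmbedding_component (auxUnit K w)]
      refine mul_pos_of_neg_of_neg ?_ (auxUnit_spec K w _ w.prop.symm)
      rw [mult]; split_ifs <;> norm_num
  · refine mul_neg_of_pos_of_neg ?_ (auxUnit_spec K w x ?_)
    · rw [mult]; split_ifs <;> norm_num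
    · exact Subtype.ext_iff.not.mp (ne_of_mem_erase hx)

end Aux

/-- Every number field has a system of `r = r₁ + r₂ - 1` multiplicatively
independent units all of whose archimedean absolute values are `≠ 1`. -/
theorem stmt_10 (K : Type*) [Field K] [NumberField K]
    (r : ℕ)
    (hr : r + 1 = NumberField.InfinitePlace.nrRealPlaces K
      + NumberField.InfinitePlace.nrComplexPlaces K) :
    ∃ ε : Fin r → (𝓞 K)ˣ,
      (∀ n : Fin r → ℤ, (∏ i, ε i ^ n i) = 1 → ∀ i, n i = 0) ∧
      ∀ (i : Fin r) (φ : K →+* ℂ), ‖φ ((ε i : 𝓞 K) : K)‖ ≠ 1 := by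
  have hcard : Fintype.card (Fin r) = Fintype.card {w : InfinitePlace K // w ≠ w₀} := by
    rw [Fintype.card_fin, Fintype.card_subtype_compl, Fintype.card_subtype_eq,
      card_eq_nrRealPlaces_add_nrComplexPlaces, ← hr]
    omega
  let e := Fintype.equivOfCardEq hcard
  refine ⟨fun i => auxUnit K (e i), fun n hn i => ?_, fun i φ => ?_⟩
  · -- independence
    have hli := (auxUnit_linearIndependent K).comp e e.injective
    have h0 : ∑ j, (n j : ℝ) • logEmbedding K (Additive.ofMul (auxUnit K (e j))) = 0 := by
      have h1 : logEmbedding K (Additive.ofMul (∏ j, auxUnit K (e j) ^ n j)) = 0 := by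
        rw [hn]; simp
      rw [ofMul_prod] at h1
      simp_rw [ofMul_zpow] at h1
      rw [map_sum] at h1
      simp_rw [map_zsmul] at h1
      rw [← h1]
      exact Finset.sum_congr rfl fun j _ => Int.cast_smul_eq_zsmul ℝ _ _
    have := Fintype.linearIndependent_iff.mp hli (fun j => (n j : ℝ)) h0 i
    exact_mod_cast this
  · -- absolute values ≠ 1
    have := auxUnit_ne_one K (e i) (InfinitePlace.mk φ)
    rwa [InfinitePlace.apply] at this
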